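/- For the ODE on ℝ² with f(x_1,x_2)=(-1,0) if x_2>x_1, f=(1,1) if x_2=x_1, f=(1,0) if x_2<x_1, and initial condition (0,0): (a) the function t↦(t,t) is the unique classical solution; (b) for every t̄∈[0,∞], the functions equal to (t,t) on [0,t̄) and to (t̄±(t-t̄), t̄) on [t̄,∞) are Caratheodory solutions; (c) there is no other Caratheodory solution. -/

import Mathlib

open Real Set MeasureTheory intervalIntegral
open scoped Interval

/-- The discontinuous planar vector field of Example 2.4: `(-1,0)` above the diagonal,
`(1,1)` on the diagonal, `(1,0)` below. -/
noncomputable def fEx : ℝ × ℝ → ℝ × ℝ := fun p =>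
  if p.1 < p.2 then (-1, 0) else if p.2 < p.1 then (1, 0) else (1, 1)

lemma fEx_diag {p : ℝ × ℝ} (h : p.1 = p.2) : fEx p = (1, 1) := by
  simp [fEx, h]

lemma fEx_above {p : ℝ × ℝ} (h : p.1 < p.2) : fEx p = (-1, 0) := by
  simp [fEx, h]

lemma fEx_below {p : ℝ × ℝ} (h : p.2 < p.1) : fEx p = (1, 0) := by
  simp [fEx, h, asymm h]

lemma fEx_norm_le (p : ℝ × ℝ) : ‖fEx p‖ ≤ 1 := by
  unfold fEx
  split_ifs <;> simp [Prod.norm_def]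

lemma fEx_measurable : Measurable fEx := by
  unfold fEx
  exact Measurable.ite (measurableSet_lt measurable_fst measurable_snd) measurable_const
    (Measurable.ite (measurableSet_lt measurable_snd measurable_fst) measurable_const
      measurable_const)

/-- the linear map g p = p.2 - p.1 -/
noncomputable def Lg : ℝ × ℝ →L[ℝ] ℝ := ContinuousLinearMap.snd ℝ ℝ ℝ - ContinuousLinearMap.fst ℝ ℝ ℝ

lemma Lg_apply (p : ℝ × ℝ) : Lg p = p.2 - p.1 := rfl

lemma ae_ne (c : ℝ) : ∀ᵐ s : ℝ, s ≠ c := by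
  have : ({c}ᶜ : Set ℝ) ∈ ae (volume : Measure ℝ) :=
    compl_mem_ae_iff.2 (measure_singleton c)
  filter_upwards [this] with s hs
  exact hs

lemma II_congr {f g : ℝ → ℝ × ℝ} {a b : ℝ} (hg : IntervalIntegrable g volume a b)
    (h : ∀ᵐ s : ℝ, s ∈ Ι a b → f s = g s) : IntervalIntegrable f volume a b := by
  constructor
  · apply hg.1.congr
    rw [Filter.EventuallyEq, ae_restrict_iff' measurableSet_Ioc]
    filter_upwards [h] with s hs hs'
    exact (hs (by simp only [uIoc] ; exact Ioc_subset_Ioc (min_le_left a b) (le_max_right a b) hs')).symm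
  · apply hg.2.congr
    rw [Filter.EventuallyEq, ae_restrict_iff' measurableSet_Ioc]
    filter_upwards [h] with s hs hs'
    exact (hs (by simp only [uIoc] ; exact Ioc_subset_Ioc (min_le_right a b) (le_max_left a b) hs')).symm

lemma backward (x : ℝ → ℝ × ℝ) (hx0 : x 0 = (0, 0))
    (h : (∀ t ≥ (0:ℝ), x t = (t, t)) ∨
      ∃ tb ≥ (0:ℝ), ∃ ε : ℝ, (ε = 1 ∨ ε = -1) ∧
        ∀ t ≥ (0:ℝ), x t = if t < tb then ((t, t) : ℝ × ℝ) else (tb + ε * (t - tb), tb)) :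
    ∀ t ≥ (0:ℝ), x t = x 0 + ∫ s in (0:ℝ)..t, fEx (x s) := by
  rcases h with h1 | ⟨tb, htb, ε, hε, hx⟩
  · intro t ht
    have heq : EqOn (fun s => fEx (x s)) (fun _ => ((1, 1) : ℝ × ℝ)) (uIcc 0 t) := by
      intro s hs
      rw [uIcc_of_le ht] at hs
      simp only
      rw [h1 s hs.1, fEx_diag rfl]
    rw [hx0, h1 t ht, integral_congr heq, intervalIntegral.integral_const]
    simp [Prod.ext_iff]
  · have key : ∀ s : ℝ, 0 ≤ s → s ≠ tb →
        fEx (x s) = if s < tb then ((1, 1) : ℝ × ℝ) else (ε, 0) := by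
      intro s hs hne
      rcases lt_or_gt_of_ne hne with hlt | hgt
      · rw [hx s hs, if_pos hlt, if_pos hlt, fEx_diag rfl]
      · rw [hx s hs, if_neg (not_lt.2 hgt.le), if_neg (not_lt.2 hgt.le)]
        rcases hε with rfl | rfl
        · rw [fEx_below (by simp; linarith)]
        · rw [fEx_above (by simp; linarith)]
    intro t ht
    rcases le_or_gt t tb with htle | htgt
    · have hae : ∀ᵐ s : ℝ, s ∈ Ι 0 t → fEx (x s) = ((1, 1) : ℝ × ℝ) := by
        filter_upwards [ae_ne tb] with s hsne hmem
        rw [uIoc_of_le ht] at hmem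
        rw [key s hmem.1.le hsne, if_pos (lt_of_le_of_ne (hmem.2.trans htle) hsne)]
      rw [hx0, integral_congr_ae hae, intervalIntegral.integral_const]
      have hxt : x t = (t, t) := by
        rcases eq_or_lt_of_le htle with rfl | hlt
        · rw [hx t ht, if_neg (lt_irrefl t)]; simp
        · rw [hx t ht, if_pos hlt]
      rw [hxt]; simp [Prod.ext_iff]
    · have hae1 : ∀ᵐ s : ℝ, s ∈ Ι 0 tb → fEx (x s) = ((1, 1) : ℝ × ℝ) := by
        filter_upwards [ae_ne tb] with s hsne hmem
        rw [uIoc_of_le htb] at hmem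
        rw [key s hmem.1.le hsne, if_pos (lt_of_le_of_ne hmem.2 hsne)]
      have hae2 : ∀ᵐ s : ℝ, s ∈ Ι tb t → fEx (x s) = ((ε, 0) : ℝ × ℝ) := by
        filter_upwards with s hmem
        rw [uIoc_of_le htgt.le] at hmem
        rw [key s (htb.trans hmem.1.le) (ne_of_gt hmem.1), if_neg (not_lt.2 hmem.1.le)]
      have hi1 : IntervalIntegrable (fun s => fEx (x s)) volume 0 tb :=
        II_congr intervalIntegrable_const hae1
      have hi2 : IntervalIntegrable (fun s => fEx (x s)) volume tb t :=
        II_congr intervalIntegrable_const hae2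
      rw [hx0, ← integral_add_adjacent_intervals hi1 hi2, integral_congr_ae hae1,
        integral_congr_ae hae2, intervalIntegral.integral_const, intervalIntegral.integral_const, hx t ht,
        if_neg (not_lt.2 htgt.le)]
      simp [Prod.ext_iff]; ring

lemma forward_integrable (x : ℝ → ℝ × ℝ) (hx0 : x 0 = (0, 0))
    (H : ∀ t ≥ (0:ℝ), x t = x 0 + ∫ s in (0:ℝ)..t, fEx (x s)) :
    ∀ t ≥ (0:ℝ), IntervalIntegrable (fun s => fEx (x s)) volume 0 t := by
  set F := fun s => fEx (x s) with hF
  by_contra hcon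
  push_neg at hcon
  obtain ⟨t0, ht0, ht0n⟩ := hcon
  set B := {t : ℝ | 0 ≤ t ∧ ¬ IntervalIntegrable F volume 0 t} with hB
  have hBne : B.Nonempty := ⟨t0, ht0, ht0n⟩
  have hBbdd : BddBelow B := ⟨0, fun t ht => ht.1⟩
  set T := sInf B with hT
  have hT0 : 0 ≤ T := le_csInf hBne fun t ht => ht.1
  have hup : ∀ t ∈ B, ∀ t', t ≤ t' → t' ∈ B := by
    intro t ht t' htt'
    refine ⟨ht.1.trans htt', fun hi => ht.2 (hi.mono_set ?_)⟩
    exact uIcc_subset_uIcc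
      (by rw [uIcc_of_le (ht.1.trans htt')]; exact ⟨le_rfl, ht.1.trans htt'⟩)
      (by rw [uIcc_of_le (ht.1.trans htt')]; exact ⟨ht.1, htt'⟩)
  have hgtB : ∀ t, T < t → t ∈ B := fun t ht => by
    obtain ⟨b, hb, hbt⟩ := exists_lt_of_csInf_lt hBne ht
    exact hup b hb t hbt.le
  have hzero : ∀ t, T < t → x t = (0, 0) := by
    intro t ht
    have h1 := H t (hT0.trans ht.le)
    rw [integral_undef (hgtB t ht).2] at h1
    rw [h1, hx0]; simp
  have hlt : ∀ t, 0 ≤ t → t < T → IntervalIntegrable F volume 0 t := by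
    intro t h0 hlt
    by_contra hn
    exact absurd (csInf_le hBbdd ⟨h0, hn⟩) (not_le.2 hlt)
  have hIocT : IntegrableOn F (Ioc 0 T) := by
    rcases eq_or_lt_of_le hT0 with heq | hTpos
    · rw [← heq, Ioc_self]; exact integrableOn_empty
    · set u : ℕ → ℝ := fun n => max 0 (T - 1/(n+1)) with hu
      have hu0 : ∀ n, 0 ≤ u n := fun n => le_max_left _ _
      have huT : ∀ n, u n < T := fun n =>
        max_lt hTpos (by
          have : (0:ℝ) < 1/((n:ℝ)+1) := by positivity
          linarith)
      have hIn : ∀ n : ℕ, IntegrableOn F (Ioc 0 (u n)) := fun n =>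
        (intervalIntegrable_iff_integrableOn_Ioc_of_le (hu0 n)).1 (hlt (u n) (hu0 n) (huT n))
      have hmeas : AEStronglyMeasurable F (volume.restrict (⋃ n, Ioc 0 (u n))) :=
        aestronglyMeasurable_iUnion_iff.2 fun n => (hIn n).aestronglyMeasurable
      have hsub : Ioo 0 T ⊆ ⋃ n, Ioc 0 (u n) := by
        intro s hs
        obtain ⟨n, hn⟩ := exists_nat_one_div_lt (sub_pos.2 hs.2)
        exact mem_iUnion.2 ⟨n, hs.1, le_max_of_le_right (by linarith)⟩
      have hmeas2 : AEStronglyMeasurable F (volume.restrict (Ioc 0 T)) := by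
        rw [← Measure.restrict_congr_set Ioo_ae_eq_Ioc]
        exact hmeas.mono_measure (Measure.restrict_mono hsub le_rfl)
      refine Integrable.mono' (g := fun _ => (1:ℝ)) (integrableOn_const measure_Ioc_lt_top.ne) hmeas2 ?_
      filter_upwards with s
      exact fEx_norm_le _
  have hTB : T + 1 ∈ B := hgtB _ (by linarith)
  apply hTB.2
  rw [intervalIntegrable_iff_integrableOn_Ioc_of_le (by linarith),
    ← Ioc_union_Ioc_eq_Ioc hT0 (by linarith : T ≤ T + 1)]
  apply hIocT.union
  have hc : IntegrableOn (fun _ => ((1, 1) : ℝ × ℝ)) (Ioc T (T + 1)) :=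
    integrableOn_const measure_Ioc_lt_top.ne
  refine hc.congr_fun (fun s hs => ?_) measurableSet_Ioc
  rw [hF]; simp only; rw [hzero s hs.1, fEx_diag rfl]

lemma forward (x : ℝ → ℝ × ℝ) (hx0 : x 0 = (0, 0))
    (H : ∀ t ≥ (0:ℝ), x t = x 0 + ∫ s in (0:ℝ)..t, fEx (x s)) :
    (∀ t ≥ (0:ℝ), x t = (t, t)) ∨
      ∃ tb ≥ (0:ℝ), ∃ ε : ℝ, (ε = 1 ∨ ε = -1) ∧
        ∀ t ≥ (0:ℝ), x t = if t < tb then ((t, t) : ℝ × ℝ) else (tb + ε * (t - tb), tb) := by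
  have hInt := forward_integrable x hx0 H
  set F := fun s => fEx (x s) with hF
  have hInt2 : ∀ s t : ℝ, 0 ≤ s → s ≤ t → IntervalIntegrable F volume s t := by
    intro s t hs hst
    refine (hInt t (hs.trans hst)).mono_set (uIcc_subset_uIcc ?_ ?_)
    · rw [uIcc_of_le (hs.trans hst)]; exact ⟨hs, hst⟩
    · rw [uIcc_of_le (hs.trans hst)]; exact ⟨hs.trans hst, le_rfl⟩
  have Hdiff : ∀ s t : ℝ, 0 ≤ s → s ≤ t → x t - x s = ∫ u in s..t, F u := by
    intro s t hs hst
    rw [H t (hs.trans hst), H s hs,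
      ← integral_interval_sub_left (hInt t (hs.trans hst)) (hInt s hs)]
    abel
  have hcont : ContinuousOn x (Ici 0) := by
    have hlip : LipschitzOnWith 1 x (Ici 0) := by
      apply LipschitzOnWith.of_dist_le_mul
      intro a ha b hb
      wlog hab : b ≤ a generalizing a b
      · rw [dist_comm, dist_comm a b]; exact this b hb a ha (le_of_not_ge hab)
      rw [dist_eq_norm, Hdiff b a hb hab]
      calc ‖∫ u in b..a, F u‖ ≤ 1 * |a - b| :=
            norm_integral_le_of_norm_le_const fun u _ => fEx_norm_le _
        _ = ↑(1 : NNReal) * dist a b := by rw [Real.dist_eq]; norm_num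
    exact hlip.continuousOn
  set g := fun t => (x t).2 - (x t).1 with hg
  have hcontg : ContinuousOn g (Ici 0) :=
    ContinuousOn.sub (continuous_snd.comp_continuousOn hcont)
      (continuous_fst.comp_continuousOn hcont)
  have hgdiff : ∀ s t : ℝ, 0 ≤ s → s ≤ t →
      g t - g s = ∫ u in s..t, ((F u).2 - (F u).1) := by
    intro s t hs hst
    have h1 : (∫ u in s..t, ((F u).2 - (F u).1)) = Lg (∫ u in s..t, F u) := by
      rw [← ContinuousLinearMap.intervalIntegral_comp_comm Lg (hInt2 s t hs hst)]
      simp only [Lg_apply]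
    rw [h1, ← Hdiff s t hs hst, hg]
    simp only [map_sub, Lg_apply, Prod.snd_sub, Prod.fst_sub]
  have habove : ∀ s, 0 < g s → F s = ((-1, 0) : ℝ × ℝ) := by
    intro s hgs
    exact fEx_above (by rw [hg] at hgs; simp only at hgs; linarith)
  have hbelow : ∀ s, g s < 0 → F s = ((1, 0) : ℝ × ℝ) := by
    intro s hgs
    exact fEx_below (by rw [hg] at hgs; simp only at hgs; linarith)
  have hdiag' : ∀ s, g s = 0 → F s = ((1, 1) : ℝ × ℝ) := by
    intro s hgs
    exact fEx_diag (by rw [hg] at hgs; simp only at hgs; linarith)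
  have hdown : ∀ t, 0 ≤ t → g t = 0 → ∀ s, 0 ≤ s → s ≤ t → g s = 0 := by
    intro t ht hgt s hs hst
    by_contra hgs
    set K := Icc s t ∩ g ⁻¹' {0} with hK
    have hKcont : ContinuousOn g (Icc s t) := hcontg.mono fun r hr => hs.trans hr.1
    have hKclosed : IsClosed K :=
      hKcont.preimage_isClosed_of_isClosed isClosed_Icc isClosed_singleton
    have hKcpt : IsCompact K := isCompact_Icc.of_isClosed_subset hKclosed inter_subset_left
    have hKne : K.Nonempty := ⟨t, ⟨hst, le_rfl⟩, hgt⟩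
    set u := sInf K with hu
    have huK : u ∈ K := hKcpt.sInf_mem hKne
    have hsu : s ≤ u := huK.1.1
    have hut : u ≤ t := huK.1.2
    have hgu : g u = 0 := huK.2
    have hsu' : s < u := lt_of_le_of_ne hsu (by intro h; rw [h] at hgs; exact hgs hgu)
    have hne : ∀ r, s ≤ r → r < u → g r ≠ 0 := by
      intro r hr1 hr2 h0
      exact absurd (csInf_le hKcpt.bddBelow ⟨⟨hr1, hr2.le.trans hut⟩, h0⟩) (not_le.2 hr2)
    have hsign : ∀ r, s ≤ r → r < u → (0 < g r ↔ 0 < g s) := by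
      intro r hr1 hr2
      by_contra hiff
      have hgr := hne r hr1 hr2
      have hop : (0 < g r ∧ g s < 0) ∨ (g r < 0 ∧ 0 < g s) := by
        rcases lt_or_gt_of_ne hgr with h | h <;> rcases lt_or_gt_of_ne hgs with h' | h'
        · exact absurd (iff_of_false (not_lt.2 h.le) (not_lt.2 h'.le)) hiff
        · exact Or.inr ⟨h, h'⟩
        · exact Or.inl ⟨h, h'⟩
        · exact absurd (iff_of_true h h') hiff
      have hsubi : uIcc s r ⊆ Icc s t := by
        rw [uIcc_of_le hr1]; exact Icc_subset_Icc le_rfl (hr2.le.trans hut)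
      have hcont' : ContinuousOn g (uIcc s r) := hKcont.mono hsubi
      have h0mem : (0:ℝ) ∈ uIcc (g s) (g r) := by
        rw [mem_uIcc]
        rcases hop with ⟨h1, h2⟩ | ⟨h1, h2⟩
        · exact Or.inl ⟨h2.le, h1.le⟩
        · exact Or.inr ⟨h1.le, h2.le⟩
      obtain ⟨c, hc, hc0⟩ := intermediate_value_uIcc hcont' h0mem
      rw [uIcc_of_le hr1] at hc
      exact hne c hc.1 (lt_of_le_of_lt hc.2 hr2) hc0
    have hgd := hgdiff s u hs hsu'.le
    rw [hgu] at hgd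
    rcases lt_or_gt_of_ne hgs with hneg | hpos
    · have hae : ∀ᵐ r : ℝ, r ∈ Ι s u → ((F r).2 - (F r).1) = -1 := by
        filter_upwards [ae_ne u] with r hru hmem
        rw [uIoc_of_le hsu'.le] at hmem
        have hru' : r < u := lt_of_le_of_ne hmem.2 hru
        have hgr : g r < 0 := by
          rcases lt_or_gt_of_ne (hne r hmem.1.le hru') with h | h
          · exact h
          · exact absurd ((hsign r hmem.1.le hru').1 h) (not_lt.2 hneg.le)
        rw [hbelow r hgr]; norm_num
      rw [integral_congr_ae hae, intervalIntegral.integral_const, smul_eq_mul] at hgd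
      linarith
    · have hae : ∀ᵐ r : ℝ, r ∈ Ι s u → ((F r).2 - (F r).1) = 1 := by
        filter_upwards [ae_ne u] with r hru hmem
        rw [uIoc_of_le hsu'.le] at hmem
        have hru' : r < u := lt_of_le_of_ne hmem.2 hru
        have hgr : 0 < g r := (hsign r hmem.1.le hru').2 hpos
        rw [habove r hgr]; norm_num
      rw [integral_congr_ae hae, intervalIntegral.integral_const, smul_eq_mul] at hgd
      linarith
  have hdiagval : ∀ t, 0 ≤ t → g t = 0 → x t = (t, t) := by
    intro t ht hgt
    have hall : EqOn F (fun _ => ((1, 1) : ℝ × ℝ)) (uIcc 0 t) := by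
      intro s hsm
      rw [uIcc_of_le ht] at hsm
      exact hdiag' s (hdown t ht hgt s hsm.1 hsm.2)
    have hH := H t ht
    rw [hx0, integral_congr hall, intervalIntegral.integral_const] at hH
    rw [hH]; simp [Prod.ext_iff]
  have hg0 : g 0 = 0 := by rw [hg]; simp [hx0]
  by_cases hbdd : BddAbove {t : ℝ | 0 ≤ t ∧ g t = 0}
  case neg =>
    left
    intro t ht
    obtain ⟨d, hd, htd⟩ := not_bddAbove_iff.1 hbdd t
    exact hdiagval t ht (hdown d hd.1 hd.2 t ht htd.le)
  case pos =>
    right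
    set D := {t : ℝ | 0 ≤ t ∧ g t = 0} with hD
    have h0D : (0:ℝ) ∈ D := ⟨le_rfl, hg0⟩
    set tb := sSup D with htbdef
    have hDne : D.Nonempty := ⟨0, h0D⟩
    have htb0 : 0 ≤ tb := le_csSup hbdd h0D
    have hIcoD : ∀ s, 0 ≤ s → s < tb → g s = 0 := by
      intro s hs hstb
      obtain ⟨d, hd, hsd⟩ := exists_lt_of_lt_csSup hDne hstb
      exact hdown d hd.1 hd.2 s hs hsd.le
    have hgtb : g tb = 0 := by
      rcases eq_or_lt_of_le htb0 with heq | hpos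
      · rw [← heq]; exact hg0
      · haveI hnb : (nhdsWithin tb (Ico 0 tb)).NeBot :=
          mem_closure_iff_nhdsWithin_neBot.1
            (by rw [closure_Ico (ne_of_lt hpos)]; exact ⟨htb0, le_rfl⟩)
        have h1 : Filter.Tendsto g (nhdsWithin tb (Ico 0 tb)) (nhds (g tb)) :=
          (hcontg tb hpos.le).tendsto.mono_left
            (nhdsWithin_mono tb (Ico_subset_Ici_self))
        have heo : ∀ᶠ r in nhdsWithin tb (Ico 0 tb), g r = 0 :=
          eventually_nhdsWithin_of_forall fun r hr => hIcoD r hr.1 hr.2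
        have h2 : Filter.Tendsto g (nhdsWithin tb (Ico 0 tb)) (nhds 0) :=
          Filter.Tendsto.congr' (Filter.eventuallyEq_of_mem self_mem_nhdsWithin
            fun r hr => (hIcoD r hr.1 hr.2).symm) tendsto_const_nhds
        exact tendsto_nhds_unique h1 h2
    have hxtb : x tb = (tb, tb) := hdiagval tb htb0 hgtb
    have hxlt : ∀ s, 0 ≤ s → s ≤ tb → x s = (s, s) := fun s hs hstb =>
      hdiagval s hs (hdown tb htb0 hgtb s hs hstb)
    have hgne : ∀ t, tb < t → g t ≠ 0 := fun t ht h0 =>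
      absurd (le_csSup hbdd ⟨htb0.trans ht.le, h0⟩) (not_le.2 ht)
    have hsame : ∀ a b, tb < a → tb < b → 0 < g a → 0 < g b := by
      intro a b ha hb hga
      by_contra hgb
      have hgb' : g b < 0 := lt_of_le_of_ne (not_lt.1 hgb) (hgne b hb)
      have hconta : ContinuousOn g (uIcc a b) :=
        hcontg.mono fun r hr => le_trans (htb0.trans (lt_min ha hb).le) hr.1
      obtain ⟨c, hc, hc0⟩ :=
        intermediate_value_uIcc hconta (mem_uIcc.2 (Or.inr ⟨hgb'.le, hga.le⟩))
      exact hgne c (lt_of_lt_of_le (lt_min ha hb) hc.1) hc0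
    have hmain : ∀ ε : ℝ, (ε = 1 ∨ ε = -1) → (∀ s, tb < s → F s = ((ε, 0) : ℝ × ℝ)) →
        ∀ t ≥ (0:ℝ), x t = if t < tb then ((t, t) : ℝ × ℝ) else (tb + ε * (t - tb), tb) := by
      intro ε hε hFs t ht
      by_cases hlt : t < tb
      · rw [if_pos hlt]; exact hxlt t ht hlt.le
      · rw [if_neg hlt]
        push_neg at hlt
        rcases eq_or_lt_of_le hlt with heq | hgt
        · rw [← heq, hxtb]; simp [Prod.ext_iff]
        · have hae : ∀ᵐ s : ℝ, s ∈ Ι tb t → F s = ((ε, 0) : ℝ × ℝ) := by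
            filter_upwards with s hmem
            rw [uIoc_of_le hgt.le] at hmem
            exact hFs s hmem.1
          have hd := Hdiff tb t htb0 hgt.le
          rw [integral_congr_ae hae, intervalIntegral.integral_const, hxtb] at hd
          have h2 := eq_add_of_sub_eq hd
          rw [h2]
          simp [Prod.ext_iff]
          ring
    have h1 : g (tb + 1) ≠ 0 := hgne _ (by linarith)
    rcases lt_or_gt_of_ne h1 with hneg | hpos'
    · refine ⟨tb, htb0, 1, Or.inl rfl, ?_⟩
      refine hmain 1 (Or.inl rfl) ?_
      intro s hs
      have hgs : g s < 0 := by
        rcases lt_or_gt_of_ne (hgne s hs) with h | h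
        · exact h
        · exact absurd (hsame s (tb + 1) hs (by linarith) h) (not_lt.2 hneg.le)
      exact hbelow s hgs
    · refine ⟨tb, htb0, -1, Or.inr rfl, ?_⟩
      refine hmain (-1) (Or.inr rfl) ?_
      intro s hs
      have hgs : 0 < g s := hsame (tb + 1) s (by linarith) hs hpos'
      exact habove s hgs

/-- For the ODE `ẋ = fEx(x)` with initial condition `(0,0)`:
(a) `t ↦ (t,t)` is a classical solution and every classical solution coincides with it;
(b)&(c) the Caratheodory solutions (in the equivalent integral form) are exactly `t ↦ (t,t)`
together with, for every `t̄ ≥ 0` and sign `ε = ±1`, the function equal to `(t,t)` on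
`[0,t̄)` and to `(t̄ + ε (t - t̄), t̄)` on `[t̄, ∞)`. -/
theorem stmt_14 :
    (∀ t ≥ (0:ℝ), HasDerivWithinAt (fun s => ((s, s) : ℝ × ℝ))
      (fEx (t, t)) (Set.Ici 0) t) ∧
    (∀ x : ℝ → ℝ × ℝ, x 0 = (0, 0) →
      (∀ t ≥ (0:ℝ), HasDerivWithinAt x (fEx (x t)) (Set.Ici 0) t) →
      ∀ t ≥ (0:ℝ), x t = (t, t)) ∧
    (∀ x : ℝ → ℝ × ℝ, x 0 = (0, 0) →
      ((∀ t ≥ (0:ℝ), x t = x 0 + ∫ s in (0:ℝ)..t, fEx (x s)) ↔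
        ((∀ t ≥ (0:ℝ), x t = (t, t)) ∨
          ∃ tb ≥ (0:ℝ), ∃ ε : ℝ, (ε = 1 ∨ ε = -1) ∧
            ∀ t ≥ (0:ℝ), x t = if t < tb then ((t, t) : ℝ × ℝ)
              else (tb + ε * (t - tb), tb)))) := by
  refine ⟨?_, ?_, ?_⟩
  · intro t ht
    rw [fEx_diag rfl]
    exact (HasDerivAt.prodMk (hasDerivAt_id t) (hasDerivAt_id t)).hasDerivWithinAt
  · intro x hx0 hder
    have hcont : ContinuousOn x (Ici 0) := fun t ht => (hder t ht).continuousWithinAt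
    have hInt : ∀ t ≥ (0:ℝ), IntervalIntegrable (fun s => fEx (x s)) volume 0 t := by
      intro t ht
      rw [intervalIntegrable_iff_integrableOn_Ioc_of_le ht]
      have hxm : AEMeasurable x (volume.restrict (Ioc 0 t)) :=
        (hcont.mono fun s hs => hs.1.le).aemeasurable measurableSet_Ioc
      have hm : AEMeasurable (fun s => fEx (x s)) (volume.restrict (Ioc 0 t)) :=
        fEx_measurable.comp_aemeasurable hxm
      refine Integrable.mono' (g := fun _ => (1:ℝ))
        (integrableOn_const measure_Ioc_lt_top.ne) hm.aestronglyMeasurable ?_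
      filter_upwards with s
      exact fEx_norm_le _
    have H : ∀ t ≥ (0:ℝ), x t = x 0 + ∫ s in (0:ℝ)..t, fEx (x s) := by
      intro t ht
      have hftc := integral_eq_sub_of_hasDeriv_right_of_le ht
        (hcont.mono (Icc_subset_Ici_self))
        (fun u hu => ((hder u hu.1.le).mono fun r hr => (hu.1.trans hr).le))
        (hInt t ht)
      rw [hftc]; abel
    rcases forward x hx0 H with h | ⟨tb, htb, ε, hε, hxf⟩
    · exact h
    · exfalso
      have hxtb : x tb = (tb, tb) := by
        have := hxf tb htb
        rw [if_neg (lt_irrefl tb)] at this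
        simpa using this
      have hd1 : HasDerivWithinAt x ((1, 1) : ℝ × ℝ) (Ici tb) tb := by
        have := (hder tb htb).mono (Ici_subset_Ici.2 htb)
        rwa [hxtb, fEx_diag rfl] at this
      have hy : HasDerivWithinAt (fun t => ((tb + ε * (t - tb), tb) : ℝ × ℝ))
          ((ε, 0) : ℝ × ℝ) (Ici tb) tb := by
        have h1 : HasDerivAt (fun t : ℝ => tb + ε * (t - tb)) ε tb := by
          have := HasDerivAt.const_add tb (HasDerivAt.const_mul ε ((hasDerivAt_id tb).sub_const tb))
          simpa using this
        exact (HasDerivAt.prodMk h1 (hasDerivAt_const tb tb)).hasDerivWithinAt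
      have hd2 : HasDerivWithinAt x ((ε, 0) : ℝ × ℝ) (Ici tb) tb := by
        refine hy.congr ?_ ?_
        · intro r hr
          rw [hxf r (htb.trans hr), if_neg (not_lt.2 hr)]
        · rw [hxtb]; simp
      have hu := uniqueDiffOn_Ici tb tb Set.self_mem_Ici
      have e1 := hd1.derivWithin hu
      have e2 := hd2.derivWithin hu
      rw [e1] at e2
      exact absurd (congrArg Prod.snd e2) (by norm_num)
  · intro x hx0
    exact ⟨forward x hx0, backward x hx0⟩
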